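/- Let σ be a singular cardinal of countable cofinality, ⟨σ_n : n < ω⟩ an increasing sequence of regular cardinals cofinal in σ, and ⟨f_α : α < σ⁺⟩ a scale in ∏_n σ_n. If σ⁺ ∈ I[σ⁺] (the approachability property holds at σ⁺), then there is a club C ⊆ σ⁺ such that every γ ∈ C of uncountable cofinality is a good point for the scale. -/

import Mathlib

/-- The order type of a set of ordinals. -/
noncomputable def otype (A : Set Ordinal.{0}) : Ordinal.{1} :=
  @Ordinal.type A (Subrel ((· < ·) : Ordinal → Ordinal → Prop) A)
    (Subrel.instIsWellOrderSubtype _ A)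

/-- `C` is a club (closed unbounded) subset of the ordinal `τ`. -/
def IsClubIn (C : Set Ordinal.{0}) (τ : Ordinal.{0}) : Prop :=
  C ⊆ Set.Iio τ ∧ (∀ β < τ, ∃ ξ ∈ C, β < ξ) ∧
    ∀ γ < τ, 0 < γ → (∀ β < γ, ∃ ξ ∈ C, β < ξ ∧ ξ < γ) → γ ∈ C

/-- `γ` is approachable with respect to the sequence `⟨a α : α⟩`: there is an
unbounded `A ⊆ γ` of order type `cf γ` all of whose proper initial segments
occur as some `a α` with `α < γ`. -/
def ApproachableWrt (a : Ordinal.{0} → Set Ordinal.{0}) (γ : Ordinal.{0}) : Prop :=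
  ∃ A : Set Ordinal, A ⊆ Set.Iio γ ∧ (∀ β < γ, ∃ ξ ∈ A, β ≤ ξ) ∧
    otype A = Ordinal.lift.{1} (Ordinal.cof γ).ord ∧
    ∀ β < γ, ∃ α < γ, A ∩ Set.Iio β = a α

/-- `a` is a `τ`-sequence of bounded subsets of `τ`. -/
def BddSubsetSeq (a : Ordinal.{0} → Set Ordinal.{0}) (τ : Ordinal.{0}) : Prop :=
  ∀ α < τ, ∃ β < τ, a α ⊆ Set.Iio β

/-- `S` belongs to the approachability ideal `I[τ]`. -/
def InApprIdeal (S : Set Ordinal.{0}) (τ : Ordinal.{0}) : Prop :=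
  ∃ a : Ordinal → Set Ordinal, BddSubsetSeq a τ ∧
    ∃ C : Set Ordinal, IsClubIn C τ ∧ ∀ γ ∈ S ∩ C, ApproachableWrt a γ

/-- `⟨f α : α < σ⁺⟩` is a scale of length `σ⁺` in `∏ n, σs n`, where `σs` is an
increasing sequence of regular cardinals cofinal in `σ`: the sequence is
increasing and cofinal in the eventual domination ordering. -/
def IsScale (σ : Cardinal.{0}) (σs : ℕ → Cardinal.{0})
    (f : Ordinal.{0} → ℕ → Ordinal.{0}) : Prop :=
  (∀ n, (σs n).IsRegular) ∧ StrictMono σs ∧ (∀ n, σs n < σ) ∧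
  (∀ c < σ, ∃ n, c < σs n) ∧
  (∀ α < (Order.succ σ).ord, ∀ n, f α n < (σs n).ord) ∧
  (∀ α β : Ordinal, α < β → β < (Order.succ σ).ord →
    ∃ N : ℕ, ∀ n ≥ N, f α n < f β n) ∧
  (∀ g : ℕ → Ordinal, (∀ n, g n < (σs n).ord) →
    ∃ α < (Order.succ σ).ord, ∃ N : ℕ, ∀ n ≥ N, g n < f α n)

/-- `γ` is a good point for the scale `f`: there are an unbounded `A ⊆ γ` and
`N < ω` such that `⟨f α n : α ∈ A⟩` is strictly increasing for all `n ≥ N`. -/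
def GoodPoint (f : Ordinal.{0} → ℕ → Ordinal.{0}) (γ : Ordinal.{0}) : Prop :=
  ∃ A : Set Ordinal, A ⊆ Set.Iio γ ∧ (∀ β < γ, ∃ ξ ∈ A, β ≤ ξ) ∧
    ∃ N : ℕ, ∀ n ≥ N, ∀ α ∈ A, ∀ β ∈ A, α < β → f α n < f β n

section AuxGoodScale
open Ordinal Set Cardinal



lemma sSup_lt_of_card (S : Set Ordinal.{0}) {c : Ordinal.{0}}
    (hS : ∀ x ∈ S, x < c) (hcard : #S < Cardinal.lift.{1} c.cof) : sSup S < c := by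
  have hsmall : Small.{0} S := Ordinal.bddAbove_iff_small.mp ⟨c, fun x hx => (hS x hx).le⟩
  let g : Shrink.{0} S → Ordinal := fun i => ((equivShrink S).symm i : Ordinal)
  have hrange : Set.range g = S := by
    ext x
    constructor
    · rintro ⟨i, rfl⟩; exact ((equivShrink S).symm i).2
    · intro hx; exact ⟨equivShrink S ⟨x, hx⟩, by simp [g]⟩
  have hmk : Cardinal.lift.{1} #(Shrink.{0} S) = #S := by
    simpa using Cardinal.lift_mk_shrink'.{1, 0} S
  have hlt : #(Shrink.{0} S) < c.cof := by
    rwa [← hmk, Cardinal.lift_lt] at hcard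
  have := Ordinal.iSup_lt_ord (f := g) hlt
    (fun i => hS _ (by rw [← hrange]; exact ⟨i, rfl⟩))
  rwa [iSup, hrange] at this

lemma exists_unbounded_piece {γ : Ordinal.{0}} (hγ : Cardinal.aleph0 < γ.cof)
    {A : Set Ordinal} (hunb : ∀ β < γ, ∃ ξ ∈ A, β ≤ ξ)
    (F : Ordinal → ℕ) : ∃ m, ∀ β < γ, ∃ ξ ∈ A, β ≤ ξ ∧ F ξ ≤ m := by
  by_contra h
  push_neg at h
  choose b hb hb2 using h
  have hsup : iSup b < γ := by
    apply Ordinal.iSup_lt_ord _ hb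
    simpa using hγ
  obtain ⟨ξ, hξA, hξ⟩ := hunb _ hsup
  have h1 : b (F ξ) ≤ ξ := le_trans (Ordinal.le_iSup b (F ξ)) hξ
  exact absurd (hb2 (F ξ) ξ hξA h1) (lt_irrefl _)

lemma isClubIn_closure {τ : Ordinal.{0}} (hτ : Cardinal.aleph0 < τ.cof)
    (hreg : ∀ x < τ, x.card < τ.cof)
    (F : Ordinal → Ordinal → Ordinal) (hF : ∀ α < τ, ∀ β < τ, F α β < τ) :
    IsClubIn {γ | γ < τ ∧ ∀ α < γ, ∀ β < γ, F α β < γ} τ := by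
  have hlim : Order.IsSuccLimit τ := Ordinal.aleph0_le_cof.1 hτ.le
  refine ⟨fun x hx => hx.1, ?_, ?_⟩
  · intro β hβ
    set B : Ordinal → Ordinal := fun x =>
      max (x + 1) (Ordinal.bsup.{0,0} x (fun α _ => Ordinal.bsup.{0,0} x (fun β' _ => F α β')) + 1)
      with hBdef
    have hBlt : ∀ x < τ, B x < τ := by
      intro x hx
      apply max_lt
      · rw [Ordinal.add_one_eq_succ]; exact hlim.succ_lt hx
      · rw [Ordinal.add_one_eq_succ]
        apply hlim.succ_lt
        apply Ordinal.bsup_lt_ord (hreg x hx)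
        intro α hα
        apply Ordinal.bsup_lt_ord (hreg x hx)
        intro β' hβ'
        exact hF α (hα.trans hx) β' (hβ'.trans hx)
    have hBgt : ∀ x, x < B x := fun x => lt_of_lt_of_le (lt_add_one x) (le_max_left _ _)
    have hBF : ∀ x, ∀ α < x, ∀ β' < x, F α β' < B x := by
      intro x α hα β' hβ'
      have h1 : F α β' ≤ Ordinal.bsup.{0,0} x (fun α _ => Ordinal.bsup.{0,0} x fun β' _ => F α β') := by
        refine le_trans (Ordinal.le_bsup (fun β' (_ : β' < x) => F α β') β' hβ') ?_
        exact Ordinal.le_bsup (fun α (_ : α < x) => Ordinal.bsup.{0,0} x fun β' _ => F α β') α hα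
      exact lt_of_lt_of_le (lt_of_le_of_lt h1 (lt_add_one _)) (le_max_right _ _)
    set g : ℕ → Ordinal := fun n => B^[n] (β + 1) with hgdef
    have hgτ : ∀ n, g n < τ := by
      intro n
      induction n with
      | zero =>
        show β + 1 < τ
        rw [Ordinal.add_one_eq_succ]; exact hlim.succ_lt hβ
      | succ n ih =>
        have : g (n+1) = B (g n) := by simp [hgdef, Function.iterate_succ_apply']
        rw [this]; exact hBlt _ ih
    have hgmono : ∀ n, g n < g (n+1) := by
      intro n
      have : g (n+1) = B (g n) := by simp [hgdef, Function.iterate_succ_apply']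
      rw [this]; exact hBgt _
    set γ := iSup g with hγdef
    have hγτ : γ < τ := by
      apply Ordinal.iSup_lt_ord _ hgτ
      simpa using hτ
    have hle : ∀ n, g n ≤ γ := fun n => Ordinal.le_iSup g n
    have hltγ : ∀ n, g n < γ := fun n => lt_of_lt_of_le (hgmono n) (hle (n+1))
    have hmem : ∀ x < γ, ∃ n, x < g n := fun x hx => Ordinal.lt_iSup_iff.1 hx
    refine ⟨γ, ⟨hγτ, ?_⟩, ?_⟩
    · intro α hα β' hβ'
      obtain ⟨n, hn⟩ := hmem α hα
      obtain ⟨m, hm⟩ := hmem β' hβ'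
      have hmono' : Monotone g := monotone_nat_of_le_succ fun n => (hgmono n).le
      have hα' : α < g (max n m) := lt_of_lt_of_le hn (hmono' (le_max_left n m))
      have hβ'' : β' < g (max n m) := lt_of_lt_of_le hm (hmono' (le_max_right n m))
      have : F α β' < B (g (max n m)) := hBF _ _ hα' _ hβ''
      have heq : g (max n m + 1) = B (g (max n m)) := by
        simp [hgdef, Function.iterate_succ_apply']
      exact lt_of_lt_of_le (heq ▸ this) (hle _)
    · have : g 0 = β + 1 := by simp [hgdef]
      calc β < β + 1 := lt_add_one β
        _ = g 0 := this.symm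
        _ ≤ γ := hle 0
  · intro γ hγ h0 happ
    refine ⟨hγ, ?_⟩
    intro α hα β hβ
    obtain ⟨ξ, hξ1, hξ2, hξ3⟩ := happ (max α β) (max_lt hα hβ)
    exact lt_trans (hξ1.2 α (lt_of_le_of_lt (le_max_left _ _) hξ2) β
      (lt_of_le_of_lt (le_max_right _ _) hξ2)) hξ3

lemma isClubIn_inter {τ : Ordinal.{0}} (hτ : Cardinal.aleph0 < τ.cof)
    {C D : Set Ordinal} (hC : IsClubIn C τ) (hD : IsClubIn D τ) : IsClubIn (C ∩ D) τ := by
  obtain ⟨hC1, hC2, hC3⟩ := hC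
  obtain ⟨hD1, hD2, hD3⟩ := hD
  refine ⟨fun x hx => hC1 hx.1, ?_, ?_⟩
  · intro β hβ
    have hfC : ∀ x, ∃ y, x < τ → y ∈ C ∧ x < y := by
      intro x
      by_cases h : x < τ
      · obtain ⟨y, hy1, hy2⟩ := hC2 x h
        exact ⟨y, fun _ => ⟨hy1, hy2⟩⟩
      · exact ⟨0, fun h' => absurd h' h⟩
    have hfD : ∀ x, ∃ y, x < τ → y ∈ D ∧ x < y := by
      intro x
      by_cases h : x < τ
      · obtain ⟨y, hy1, hy2⟩ := hD2 x h
        exact ⟨y, fun _ => ⟨hy1, hy2⟩⟩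
      · exact ⟨0, fun h' => absurd h' h⟩
    choose fC hfC using hfC
    choose fD hfD using hfD
    set g : ℕ → Ordinal := fun n => (fun x => fD (fC x))^[n] β with hg
    have hstep : ∀ x, x < τ → (fC x ∈ C ∧ x < fC x) ∧ fC x < τ ∧
        (fD (fC x) ∈ D ∧ fC x < fD (fC x)) ∧ fD (fC x) < τ := by
      intro x hx
      have h1 := hfC x hx
      have h2 : fC x < τ := hC1 h1.1
      have h3 := hfD (fC x) h2
      exact ⟨h1, h2, h3, hD1 h3.1⟩
    have hglt : ∀ n, g n < τ := by
      intro n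
      induction n with
      | zero => exact hβ
      | succ n ih =>
        have := hstep (g n) ih
        simpa [hg, Function.iterate_succ_apply'] using this.2.2.2
    have hgmono : ∀ n, g n < g (n + 1) := by
      intro n
      have := hstep (g n) (hglt n)
      have : g n < fD (fC (g n)) := lt_trans this.1.2 this.2.2.1.2
      simpa [hg, Function.iterate_succ_apply']
    have hbdd : BddAbove (Set.range g) := ⟨τ, by rintro x ⟨n, rfl⟩; exact (hglt n).le⟩
    set γ := iSup g with hγdef
    have hγτ : γ < τ := by
      apply Ordinal.iSup_lt_ord _ hglt
      simpa using hτ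
    have hle : ∀ n, g n ≤ γ := fun n => Ordinal.le_iSup g n
    have hltγ : ∀ n, g n < γ := fun n => lt_of_lt_of_le (hgmono n) (hle (n+1))
    have h0γ : 0 < γ := lt_of_le_of_lt (zero_le : (0 : Ordinal) ≤ g 0) (hltγ 0)
    have hmem : ∀ x < γ, ∃ n, x < g n := by
      intro x hx
      rw [hγdef, Ordinal.lt_iSup_iff] at hx
      exact hx
    have hβγ : β < γ := by
      have : g 0 = β := by simp [hg]
      rw [← this]; exact hltγ 0
    refine ⟨γ, ⟨?_, ?_⟩, hβγ⟩
    · refine hC3 γ hγτ h0γ ?_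
      intro x hx
      obtain ⟨n, hn⟩ := hmem x hx
      have hs := hstep (g n) (hglt n)
      refine ⟨fC (g n), hs.1.1, lt_of_lt_of_le hn hs.1.2.le, ?_⟩
      calc fC (g n) < fD (fC (g n)) := hs.2.2.1.2
        _ = g (n+1) := by simp [hg, Function.iterate_succ_apply']
        _ < γ := hltγ (n+1)
    · refine hD3 γ hγτ h0γ ?_
      intro x hx
      obtain ⟨n, hn⟩ := hmem x hx
      have hs := hstep (g n) (hglt n)
      refine ⟨fD (fC (g n)), hs.2.2.1.1, ?_, ?_⟩
      · exact lt_trans (lt_of_lt_of_le hn hs.1.2.le) hs.2.2.1.2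
      · calc fD (fC (g n)) = g (n+1) := by simp [hg, Function.iterate_succ_apply']
          _ < γ := hltγ (n+1)
  · intro γ hγ h0 happ
    constructor
    · exact hC3 γ hγ h0 fun β hβ => (happ β hβ).imp fun ξ h => ⟨h.1.1, h.2⟩
    · exact hD3 γ hγ h0 fun β hβ => (happ β hβ).imp fun ξ h => ⟨h.1.2, h.2⟩

end AuxGoodScale

open Ordinal Set Cardinal in
/-- Let `σ` be a singular cardinal of countable cofinality, `σs` an increasing
sequence of regular cardinals cofinal in `σ`, and `f` a scale of length `σ⁺`
in `∏ n, σs n`.  If the approachability property holds at `σ⁺`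
(`σ⁺ ∈ I[σ⁺]`), then there is a club `C ⊆ σ⁺` such that every `γ ∈ C` of
uncountable cofinality is a good point for the scale. -/
theorem approachability_implies_good_scale (σ : Cardinal.{0})
    (hσ : Cardinal.aleph0 < σ) (hcof : σ.ord.cof = Cardinal.aleph0)
    (σs : ℕ → Cardinal) (f : Ordinal → ℕ → Ordinal)
    (hscale : IsScale σ σs f)
    (happr : InApprIdeal (Set.Iio (Order.succ σ).ord) (Order.succ σ).ord) :
    ∃ C : Set Ordinal, IsClubIn C (Order.succ σ).ord ∧
      ∀ γ ∈ C, Cardinal.aleph0 < γ.cof → GoodPoint f γ := by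
  classical
  obtain ⟨hreg, hmono, hltσ, hcofσs, hbd, hinc, hcofin⟩ := hscale
  obtain ⟨a, habdd, C₀, hC₀, happr'⟩ := happr
  set τ := (Order.succ σ).ord with hτdef
  have hsuccreg : (Order.succ σ).IsRegular := Cardinal.isRegular_succ hσ.le
  have hτcof : τ.cof = Order.succ σ := hsuccreg.cof_eq
  have hℵτ : Cardinal.aleph0 < τ.cof := by
    rw [hτcof]; exact hσ.trans (Order.lt_succ σ)
  have hτlim : Order.IsSuccLimit τ := Cardinal.isSuccLimit_ord hsuccreg.aleph0_le
  have hregτ : ∀ x < τ, x.card < τ.cof := by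
    intro x hx
    rw [hτcof]
    exact Cardinal.lt_ord.1 hx
  set Ds : Ordinal → ℕ → Ordinal := fun α n => sSup ((fun ζ => f ζ n + 1) '' a α) with hDs
  set gm : Ordinal → ℕ → Ordinal :=
    fun α n => if Ds α n < (σs n).ord then Ds α n else 0 with hgm
  have hgmlt : ∀ α n, gm α n < (σs n).ord := by
    intro α n
    by_cases h : Ds α n < (σs n).ord
    · simpa [hgm, h] using h
    · simp only [hgm, h, if_false]
      rw [← Cardinal.ord_zero]
      exact Cardinal.ord_lt_ord.2 (hreg n).pos
  have hHex : ∀ α, ∃ δ, δ < τ ∧ ∃ M, ∀ n ≥ M, gm α n < f δ n := by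
    intro α
    obtain ⟨δ, hδ, M, hM⟩ := hcofin (gm α) (hgmlt α)
    exact ⟨δ, hδ, M, hM⟩
  choose H hHτ MH hMH using hHex
  set F : Ordinal → Ordinal → Ordinal := fun α η => max (H α) η + 1 with hFdef
  have hFτ : ∀ α < τ, ∀ η < τ, F α η < τ := by
    intro α hα η hη
    show max (H α) η + 1 < τ
    rw [Ordinal.add_one_eq_succ]
    exact hτlim.succ_lt (max_lt (hHτ α) hη)
  have hFgt : ∀ α η, η < F α η := fun α η =>
    lt_of_le_of_lt (le_max_right _ _) (lt_add_one _)
  have hFgt' : ∀ α η, H α < F α η := fun α η =>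
    lt_of_le_of_lt (le_max_left _ _) (lt_add_one _)
  have hE := isClubIn_closure hℵτ hregτ F hFτ
  refine ⟨{γ | γ < τ ∧ ∀ α < γ, ∀ η < γ, F α η < γ} ∩ C₀, isClubIn_inter hℵτ hE hC₀, ?_⟩
  rintro γ ⟨hγE, hγC₀⟩ hγcof
  have hγτ : γ < τ := hγE.1
  have hγlim : Order.IsSuccLimit γ := Ordinal.aleph0_le_cof.1 hγcof.le
  obtain ⟨A, hAsub, hAunb, hAot, hAcode⟩ := happr' γ ⟨hγτ, hγC₀⟩
  have hκσ : γ.cof < σ := by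
    have h1 : γ.cof ≤ σ := by
      have h2 : γ.card < Order.succ σ := Cardinal.lt_ord.1 hγτ
      exact (Ordinal.cof_le_card γ).trans (Order.lt_succ_iff.1 h2)
    rcases lt_or_eq_of_le h1 with h | h
    · exact h
    · exfalso
      have hregκ : (γ.cof).IsRegular := Cardinal.isRegular_cof hγlim
      have h3 := hregκ.cof_eq
      rw [h, hcof] at h3
      exact absurd h3.symm (ne_of_gt hσ)
  obtain ⟨N, hN⟩ := hcofσs _ hκσ
  have hNall : ∀ m, N ≤ m → γ.cof < σs m := fun m hm => hN.trans_le (hmono.monotone hm)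
  have hcardA : #A = Cardinal.lift.{1} γ.cof := by
    have h1 : (otype A).card = #A := @Ordinal.card_type _ _ (Subrel.instIsWellOrderSubtype _ A)
    rw [hAot, ← Ordinal.lift_card, Cardinal.card_ord] at h1
    exact h1.symm
  have hcode : ∀ ξ, ∃ α, ξ < γ → (α < γ ∧ A ∩ Set.Iio ξ = a α) := by
    intro ξ
    by_cases h : ξ < γ
    · obtain ⟨α, hα1, hα2⟩ := hAcode ξ h
      exact ⟨α, fun _ => ⟨hα1, hα2⟩⟩
    · exact ⟨0, fun h' => absurd h' h⟩
  choose cfn hcfn using hcode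
  set d : Ordinal → Ordinal := fun ξ => F (cfn ξ) ξ with hddef
  have hd : ∀ ξ, ξ < γ → ξ < d ξ ∧ d ξ < γ := by
    intro ξ hξ
    exact ⟨hFgt _ _, hγE.2 (cfn ξ) ((hcfn ξ hξ).1) ξ hξ⟩
  have hdom : ∀ ξ, ∃ t, ξ < γ → ∀ m, t ≤ m → ∀ ζ ∈ A, ζ < ξ → f ζ m < f (d ξ) m := by
    intro ξ
    by_cases hξ : ξ < γ
    · obtain ⟨hcγ, hca⟩ := hcfn ξ hξ
      have hHd : H (cfn ξ) < d ξ := hFgt' _ _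
      have hdτ : d ξ < τ := (hd ξ hξ).2.trans hγτ
      obtain ⟨M2, hM2⟩ := hinc (H (cfn ξ)) (d ξ) hHd hdτ
      refine ⟨max N (max (MH (cfn ξ)) M2), fun _ m hm ζ hζA hζξ => ?_⟩
      have hm1 : N ≤ m := le_trans (le_max_left _ _) hm
      have hm2 : MH (cfn ξ) ≤ m := le_trans ((le_max_left _ _).trans (le_max_right _ _)) hm
      have hm3 : M2 ≤ m := le_trans ((le_max_right _ _).trans (le_max_right _ _)) hm
      have hsub : a (cfn ξ) ⊆ A := by rw [← hca]; exact Set.inter_subset_left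
      have hbddS : BddAbove ((fun ζ => f ζ m + 1) '' a (cfn ξ)) := by
        refine ⟨(σs m).ord, ?_⟩
        rintro x ⟨ζ', hζ', rfl⟩
        have hζ'τ : ζ' < τ := lt_trans (hAsub (hsub hζ')) hγτ
        show f ζ' m + 1 ≤ (σs m).ord
        rw [Ordinal.add_one_eq_succ]
        exact Order.succ_le_of_lt (hbd ζ' hζ'τ m)
      have hDlt : Ds (cfn ξ) m < (σs m).ord := by
        apply sSup_lt_of_card
        · rintro x ⟨ζ', hζ', rfl⟩
          have hζ'τ : ζ' < τ := lt_trans (hAsub (hsub hζ')) hγτ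
          show f ζ' m + 1 < (σs m).ord
          rw [Ordinal.add_one_eq_succ]
          exact (Cardinal.isSuccLimit_ord (hreg m).aleph0_le).succ_lt (hbd ζ' hζ'τ m)
        · rw [(hreg m).cof_eq]
          calc #((fun ζ => f ζ m + 1) '' a (cfn ξ)) ≤ #(a (cfn ξ)) := Cardinal.mk_image_le
            _ ≤ #A := Cardinal.mk_le_mk_of_subset hsub
            _ = Cardinal.lift.{1} γ.cof := hcardA
            _ < Cardinal.lift.{1} (σs m) := Cardinal.lift_lt.2 (hNall m hm1)
      have hgmeq : gm (cfn ξ) m = Ds (cfn ξ) m := if_pos hDlt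
      have hmem : ζ ∈ a (cfn ξ) := by rw [← hca]; exact ⟨hζA, hζξ⟩
      have step1 : f ζ m < Ds (cfn ξ) m := by
        have : f ζ m + 1 ≤ Ds (cfn ξ) m := le_csSup hbddS ⟨ζ, hmem, rfl⟩
        exact lt_of_lt_of_le (lt_add_one _) this
      have step2 : Ds (cfn ξ) m < f (H (cfn ξ)) m := by
        rw [← hgmeq]; exact hMH (cfn ξ) m hm2
      exact lt_trans (lt_trans step1 step2) (hM2 m hm3)
    · exact ⟨0, fun h' => absurd h' hξ⟩
  choose tf htf using hdom
  have hpex : ∀ ξ, ∃ pp, ξ < γ → (pp ∈ A ∧ d ξ < pp) := by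
    intro ξ
    by_cases hξ : ξ < γ
    · have h1 : d ξ + 1 < γ := by
        rw [Ordinal.add_one_eq_succ]; exact hγlim.succ_lt (hd ξ hξ).2
      obtain ⟨pp, hp1, hp2⟩ := hAunb _ h1
      exact ⟨pp, fun _ => ⟨hp1, lt_of_lt_of_le (lt_add_one _) hp2⟩⟩
    · exact ⟨0, fun h' => absurd h' hξ⟩
  choose pf hpf using hpex
  have hsex : ∀ ξ, ∃ ss, ξ < γ → ∀ m, ss ≤ m → f (d ξ) m < f (pf ξ) m := by
    intro ξ
    by_cases hξ : ξ < γ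
    · have h1 : d ξ < pf ξ := (hpf ξ hξ).2
      have h2 : pf ξ < τ := lt_trans (hAsub (hpf ξ hξ).1) hγτ
      obtain ⟨M3, hM3⟩ := hinc _ _ h1 h2
      exact ⟨M3, fun _ => hM3⟩
    · exact ⟨0, fun h' => absurd h' hξ⟩
  choose sf hsf using hsex
  obtain ⟨mstar, hmstar⟩ := exists_unbounded_piece hγcof hAunb fun ξ => max (tf ξ) (sf ξ)
  have hpickex : ∀ x, ∃ ξ, x < γ → (ξ ∈ A ∧ x ≤ ξ ∧ max (tf ξ) (sf ξ) ≤ mstar) := by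
    intro x
    by_cases h : x < γ
    · obtain ⟨ξ, h1, h2, h3⟩ := hmstar x h
      exact ⟨ξ, fun _ => ⟨h1, h2, h3⟩⟩
    · exact ⟨0, fun h' => absurd h' h⟩
  choose pick hpick using hpickex
  obtain ⟨q, hq⟩ := Ordinal.exists_fundamental_sequence γ
  have hqlt : ∀ ν (hν : ν < (γ.cof).ord), q ν hν < γ := by
    intro ν hν
    have := Ordinal.lt_blsub q ν hν
    rwa [hq.blsub_eq] at this
  set q' : Ordinal → Ordinal := fun ν => if h : ν < (γ.cof).ord then q ν h else 0 with hq'def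
  set e : Ordinal → Ordinal := Ordinal.lt_wf.fix
    (fun ν ih => pick (max (q' ν) (Ordinal.bsup.{0,0} ν (fun μ h => pf (ih μ h) + 1))))
    with hedef
  have he : ∀ ν, e ν =
      pick (max (q' ν) (Ordinal.bsup.{0,0} ν (fun μ _ => pf (e μ) + 1))) := by
    intro ν
    rw [hedef]
    rw [WellFounded.fix_eq]
  have hinv : ∀ ν, ν < (γ.cof).ord →
      (e ν ∈ A ∧ max (tf (e ν)) (sf (e ν)) ≤ mstar ∧ e ν < γ ∧ q' ν ≤ e ν ∧
        ∀ μ, μ < ν → pf (e μ) < e ν) := by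
    intro ν
    induction ν using Ordinal.induction with
    | _ ν IH =>
      intro hν
      have hq'γ : q' ν < γ := by
        rw [hq'def]; simp only [dif_pos hν]; exact hqlt ν hν
      have hbsupγ : Ordinal.bsup.{0,0} ν (fun μ _ => pf (e μ) + 1) < γ := by
        apply Ordinal.bsup_lt_ord
        · exact Cardinal.lt_ord.1 hν
        · intro μ hμ
          have h1 := IH μ hμ (hμ.trans hν)
          have hpμ : pf (e μ) ∈ A := (hpf (e μ) h1.2.2.1).1
          rw [Ordinal.add_one_eq_succ]
          exact hγlim.succ_lt (hAsub hpμ)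
      have hxγ : max (q' ν) (Ordinal.bsup.{0,0} ν (fun μ _ => pf (e μ) + 1)) < γ :=
        max_lt hq'γ hbsupγ
      have hp := hpick _ hxγ
      rw [he ν]
      refine ⟨hp.1, hp.2.2, hAsub hp.1, le_trans (le_max_left _ _) hp.2.1, ?_⟩
      intro μ hμ
      have h1 : pf (e μ) + 1 ≤ Ordinal.bsup.{0,0} ν (fun μ _ => pf (e μ) + 1) :=
        Ordinal.le_bsup _ μ hμ
      exact lt_of_lt_of_le (lt_add_one _)
        (h1.trans ((le_max_right _ _).trans hp.2.1))
  refine ⟨(fun ν => d (e ν)) '' Set.Iio ((γ.cof).ord), ?_, ?_, mstar, ?_⟩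
  · rintro x ⟨ν, hν, rfl⟩
    exact (hd (e ν) (hinv ν hν).2.2.1).2
  · intro β hβ
    have hβ' : β < Ordinal.blsub _ q := by rw [hq.blsub_eq]; exact hβ
    obtain ⟨ν, hν, hle⟩ := Ordinal.lt_blsub_iff.1 hβ'
    refine ⟨d (e ν), ⟨ν, hν, rfl⟩, ?_⟩
    have h1 : q ν hν = q' ν := by rw [hq'def]; simp only [dif_pos hν]
    calc β ≤ q ν hν := hle
      _ = q' ν := h1
      _ ≤ e ν := (hinv ν hν).2.2.2.1
      _ ≤ d (e ν) := (hd (e ν) (hinv ν hν).2.2.1).1.le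
  · intro m hm x hx y hy hxy
    obtain ⟨μ, hμ, rfl⟩ := hx
    obtain ⟨ν, hν, rfl⟩ := hy
    have hmono' : ∀ μ' ν', μ' < ν' → ν' < (γ.cof).ord → d (e μ') < d (e ν') := by
      intro μ' ν' h1 h2
      have hiν := hinv ν' h2
      have hiμ := hinv μ' (h1.trans h2)
      have h3 : pf (e μ') < e ν' := hiν.2.2.2.2 μ' h1
      have h4 : d (e μ') < pf (e μ') := (hpf (e μ') hiμ.2.2.1).2
      have h5 : e ν' < d (e ν') := (hd (e ν') hiν.2.2.1).1
      exact lt_trans (lt_trans h4 h3) h5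
    have hμν : μ < ν := by
      rcases lt_trichotomy μ ν with h | h | h
      · exact h
      · exact absurd hxy (by rw [h]; exact lt_irrefl _)
      · exact absurd (hmono' ν μ h hμ) (not_lt_of_gt hxy)
    have hiν := hinv ν hν
    have hiμ := hinv μ hμ
    have h3 : pf (e μ) < e ν := hiν.2.2.2.2 μ hμν
    have hsμ : sf (e μ) ≤ m := le_trans (le_trans (le_max_right _ _) hiμ.2.1) hm
    have htν : tf (e ν) ≤ m := le_trans (le_trans (le_max_left _ _) hiν.2.1) hm
    have step1 : f (d (e μ)) m < f (pf (e μ)) m := hsf (e μ) hiμ.2.2.1 m hsμ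
    have step2 : f (pf (e μ)) m < f (d (e ν)) m :=
      htf (e ν) hiν.2.2.1 m htν (pf (e μ)) (hpf (e μ) hiμ.2.2.1).1 h3
    exact lt_trans step1 step2
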